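/- If A(z), B(z), C(z) are pairwise mutually local fields on M, then the residual product A(z)_(m)B(z) is mutually local with C(z) for every integer m; moreover the order of locality of A(z)_(m)B(z) and C(z) is at most k₀ + ℓ₀ + m₀ − m − 1 when m < m₀, where k₀, ℓ₀, m₀ are the orders of locality of (A,C), (B,C), (A,B) respectively. -/

import Mathlib

open Finset

section VA

variable {k M : Type*} [Field k] [CharZero k] [AddCommGroup M] [Module k M]

/-- Generalized binomial coefficient `C(n,i)` for `n : ℤ`, `i : ℕ`. -/
def ichoose (n : ℤ) (i : ℕ) : ℤ :=
  if 0 ≤ n then (n.toNat.choose i : ℤ)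
  else (-1) ^ i * ((((i : ℤ) - 1 - n).toNat.choose i : ℤ))

/-- `(-1)^m` for an integer `m`. -/
def msign (m : ℤ) : ℤ := if Even m then 1 else -1

/-- A series on `M`, given by its Fourier modes `A_n`. -/
abbrev Ser (M : Type*) : Type _ := ℤ → M → M

/-- `A(z)` is a field: modes applied to any vector vanish for large index. -/
def IsFieldSer (A : Ser M) : Prop := ∀ v : M, ∃ n₀ : ℤ, ∀ n ≥ n₀, A n v = 0

/-- All modes are `k`-linear, i.e. the coefficients are endomorphisms of the
vector space `M`. -/
def IsLinSer (A : Ser M) : Prop := ∀ n : ℤ, IsLinearMap k (A n)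

/-- Residual `m`-th product, in Fourier modes:
`(A_(m)B)_n = ∑_{i≥0} (-1)^i C(m,i) (A_{m-i} B_{n+i} - (-1)^m B_{m+n-i} A_i)`. -/
noncomputable def resProd (A B : Ser M) (m : ℤ) : Ser M := fun n v =>
  ∑ᶠ i : ℕ, ((-1 : ℤ) ^ i * ichoose m i) •
    (A (m - (i : ℤ)) (B (n + (i : ℤ)) v) - msign m • B (m + n - (i : ℤ)) (A (i : ℤ) v))

/-- Mutual locality at order `n`, in Fourier modes:
`∑_{i=0}^n (-1)^i C(n,i) (A_{p+n-i} B_{q+i} - (-1)^n B_{q+n-i} A_{p+i}) = 0`. -/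
def IsLocalAt (A B : Ser M) (n : ℕ) : Prop :=
  ∀ (p q : ℤ) (v : M),
    ∑ i ∈ Finset.range (n + 1), ((-1 : ℤ) ^ i * (n.choose i : ℤ)) •
      (A (p + (n : ℤ) - (i : ℤ)) (B (q + (i : ℤ)) v)
        - (-1 : ℤ) ^ n • B (q + (n : ℤ) - (i : ℤ)) (A (p + (i : ℤ)) v)) = 0

/-- `A` and `B` are mutually local of order exactly `n₀`. -/
def HasOrder (A B : Ser M) (n₀ : ℕ) : Prop :=
  IsLocalAt A B n₀ ∧ ∀ n : ℕ, IsLocalAt A B n → n₀ ≤ n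

/-- The identity field `I(z) = id`. -/
def idSer : Ser M := fun n v => if n = -1 then v else 0

/-- Derivative of a series: `(∂A)_n = -n A_{n-1}`. -/
def dSer (A : Ser M) : Ser M := fun n v => (-n) • A (n - 1) v

/-- Divided-power derivative: `(∂^{(i)}A)_n = (-1)^i C(n,i) A_{n-i}`. -/
def dpowSer (i : ℕ) (A : Ser M) : Ser M := fun n v =>
  ((-1 : ℤ) ^ i * ichoose n i) • A (n - (i : ℤ)) v

/-- Normally ordered product `:A(z)B(z): = A(z)₋B(z) + B(z)A(z)₊`, in modes. -/
noncomputable def noProd (A B : Ser M) : Ser M := fun n v =>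
  (∑ᶠ i : ℕ, A (-(i : ℤ) - 1) (B (n + (i : ℤ)) v)) + ∑ᶠ i : ℕ, B (n - 1 - (i : ℤ)) (A (i : ℤ) v)


def Ei (m : ℤ) (i : ℕ) : ℤ := (-1) ^ i * ichoose m i

lemma ichoose_zero (m : ℤ) : ichoose m 0 = 1 := by
  unfold ichoose; split <;> simp

lemma ichoose_natCast (n : ℕ) (i : ℕ) : ichoose (n : ℤ) i = (n.choose i : ℤ) := by
  unfold ichoose; rw [if_pos (by positivity)]; simp

lemma ichoose_pascal (m : ℤ) (i : ℕ) :
    ichoose (m + 1) (i + 1) = ichoose m (i + 1) + ichoose m i := by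
  rcases le_or_gt 0 m with hm | hm
  · unfold ichoose
    rw [if_pos (by omega), if_pos hm, if_pos hm]
    have h1 : (m + 1).toNat = m.toNat + 1 := by omega
    rw [h1, Nat.choose_succ_succ]
    push_cast; ring
  · rcases eq_or_lt_of_le (by omega : m ≤ -1) with hm1 | hm1
    · subst_vars
      unfold ichoose
      norm_num
      rw [pow_succ]; ring
    · unfold ichoose
      rw [if_neg (by omega), if_neg (by omega), if_neg (by omega)]
      push_cast
      have hd : ((i:ℤ) + 1 - 1 - (m+1)) = ((i:ℤ) - 1 - m) := by ring
      have hd' : ((i:ℤ) + 1 - 1 - m) = ((i:ℤ) - 1 - m) + 1 := by ring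
      have hd2 : (((i:ℤ) - 1 - m) + 1).toNat = ((i:ℤ) - 1 - m).toNat + 1 := by omega
      rw [hd, hd', hd2, Nat.choose_succ_succ]
      push_cast; ring

lemma Ei_zero (m : ℤ) : Ei m 0 = 1 := by simp [Ei, ichoose_zero]

lemma Ei_succ (m : ℤ) (i : ℕ) : Ei (m + 1) (i + 1) = Ei m (i + 1) - Ei m i := by
  unfold Ei
  rw [ichoose_pascal]
  push_cast; ring

lemma Ei_natCast (n : ℕ) (i : ℕ) : Ei (n : ℤ) i = (-1) ^ i * (n.choose i : ℤ) := by
  rw [Ei, ichoose_natCast]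

lemma Ei_natCast_eq_zero (n : ℕ) (i : ℕ) (h : n < i) : Ei (n : ℤ) i = 0 := by
  rw [Ei_natCast, Nat.choose_eq_zero_of_lt h]; ring

lemma msign_add_one (m : ℤ) : msign (m + 1) = - msign m := by
  unfold msign
  rcases Int.even_or_odd m with h | h
  · rw [if_pos h, if_neg (by simpa [Int.even_add_one] using h)]
  · rw [if_neg (Int.not_even_iff_odd.2 h), if_pos (by simpa [Int.even_add_one] using Int.not_even_iff_odd.2 h)]
    ring

lemma msign_natCast (n : ℕ) : msign (n : ℤ) = (-1) ^ n := by
  unfold msign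
  rcases Nat.even_or_odd n with h | h
  · rw [if_pos (by exact_mod_cast h), h.neg_one_pow]
  · rw [if_neg (by simpa using (Int.odd_coe_nat n).2 h), h.neg_one_pow]


abbrev D3 (M : Type*) := ℤ × ℤ × ℤ → M

abbrev R3 : Type := AddMonoidAlgebra ℤ (ℤ × ℤ × ℤ)

noncomputable def actD (f : R3) (F : D3 M) : D3 M := fun x => f.coeff.sum fun g c => c • F (x + g)

lemma actD_single (g : ℤ×ℤ×ℤ) (c : ℤ) (F : D3 M) :
    actD (AddMonoidAlgebra.single g c) F = fun x => c • F (x + g) := by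
  funext x
  exact Finsupp.sum_single_index (zero_smul _ _)

lemma actD_one (F : D3 M) : actD 1 F = F := by
  rw [AddMonoidAlgebra.one_def, actD_single]; simp

lemma actD_zero_left (F : D3 M) : actD 0 F = 0 := by
  funext x; exact Finsupp.sum_zero_index

lemma actD_add_left (f g : R3) (F : D3 M) : actD (f + g) F = actD f F + actD g F := by
  funext x
  exact Finsupp.sum_add_index' (fun a => zero_smul _ _) (fun a b₁ b₂ => add_smul _ _ _)

lemma actD_sum_left {ι : Type*} (s : Finset ι) (f : ι → R3) (F : D3 M) :
    actD (∑ i ∈ s, f i) F = ∑ i ∈ s, actD (f i) F := by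
  induction s using Finset.cons_induction with
  | empty => simp [actD_zero_left]
  | cons a s ha ih => simp [Finset.sum_cons, actD_add_left, ih]

lemma actD_add_right (f : R3) (F G : D3 M) : actD f (F + G) = actD f F + actD f G := by
  funext x
  simp only [actD, Pi.add_apply, smul_add]
  exact Finsupp.sum_add

lemma actD_zero_right (f : R3) : actD f (0 : D3 M) = 0 := by
  funext x
  simp [actD]

lemma actD_neg_right (f : R3) (F : D3 M) : actD f (-F) = - actD f F := by
  funext x
  simp only [actD, Pi.neg_apply, smul_neg]
  exact Finsupp.sum_neg

lemma actD_zsmul_left (c : ℤ) (f : R3) (F : D3 M) : actD (c • f) F = c • actD f F := by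
  funext x
  rw [actD, AddMonoidAlgebra.coeff_smul]
  rw [Finsupp.sum_smul_index' (g := f.coeff) (b := c)
    (h := fun g d => d • F (x + g)) (fun i => zero_smul _ _)]
  simp only [actD, Pi.smul_apply, Finsupp.smul_sum, mul_smul]
  exact Finsupp.sum_congr fun g _ => by rw [smul_eq_mul, mul_smul]

lemma actD_neg_left (f : R3) (F : D3 M) : actD (-f) F = - actD f F := by
  have : -f = (-1 : ℤ) • f := by simp
  rw [this, actD_zsmul_left]; simp

lemma actD_sub_right (f : R3) (F G : D3 M) : actD f (F - G) = actD f F - actD f G := by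
  funext x
  simp only [actD, Pi.sub_apply, smul_sub]
  rw [Finsupp.sum_sub]

lemma actD_mul (f g : R3) (F : D3 M) : actD (f * g) F = actD f (actD g F) := by
  induction f using AddMonoidAlgebra.induction_linear with
  | zero => simp [actD_zero_left, zero_mul]
  | add f₁ f₂ h₁ h₂ => rw [add_mul, actD_add_left, actD_add_left, h₁, h₂]
  | single a b =>
    induction g using AddMonoidAlgebra.induction_linear with
    | zero => simp [actD_zero_left, mul_zero, actD_zero_right]
    | add g₁ g₂ h₁ h₂ => rw [mul_add, actD_add_left, actD_add_left, h₁, h₂, actD_add_right]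
    | single a' b' =>
      rw [AddMonoidAlgebra.single_mul_single, actD_single, actD_single, actD_single]
      funext x
      simp [mul_smul, add_assoc]

lemma actD_natCast (n : ℕ) (F : D3 M) : actD (n : R3) F = (n : ℤ) • F := by
  rw [AddMonoidAlgebra.natCast_def, actD_single]
  funext x; simp

-- the monomials
noncomputable def Zm : R3 := AddMonoidAlgebra.single (1,0,0) 1
noncomputable def Wm : R3 := AddMonoidAlgebra.single (0,1,0) 1
noncomputable def Xm : R3 := AddMonoidAlgebra.single (0,0,1) 1

lemma actD_sub_single (g h : ℤ×ℤ×ℤ) (F : D3 M) (x : ℤ×ℤ×ℤ) :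
    actD (AddMonoidAlgebra.single g 1 - AddMonoidAlgebra.single h 1) F x
      = F (x + g) - F (x + h) := by
  rw [sub_eq_add_neg, actD_add_left, actD_neg_left, actD_single]
  simp [actD_single, sub_eq_add_neg]

/-- binomial expansion of the action of `(σg - σh)^n`, version A -/
lemma actD_sub_pow' (g h : ℤ×ℤ×ℤ) (n : ℕ) (F : D3 M) (x : ℤ×ℤ×ℤ) :
    actD ((AddMonoidAlgebra.single g 1 - AddMonoidAlgebra.single h 1)^n) F x
      = ∑ i ∈ range (n+1), ((-1:ℤ)^(n-i) * (n.choose i : ℤ)) • F (x + i • g + (n-i) • h) := by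
  have hc : Commute (AddMonoidAlgebra.single g (1:ℤ)) (-AddMonoidAlgebra.single h 1) :=
    (Commute.all _ _)
  rw [sub_eq_add_neg, hc.add_pow, actD_sum_left]
  rw [Finset.sum_apply]
  refine Finset.sum_congr rfl fun i hi => ?_
  have : (AddMonoidAlgebra.single g (1:ℤ))^i * (-AddMonoidAlgebra.single h 1)^(n-i)
      * ((n.choose i : ℕ) : R3)
      = ((-1:ℤ)^(n-i)) • AddMonoidAlgebra.single (i • g + (n-i) • h) ((n.choose i : ℤ)) := by
    rw [neg_pow, AddMonoidAlgebra.single_pow, AddMonoidAlgebra.single_pow,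
      AddMonoidAlgebra.natCast_def]
    have h1 : ((-1 : R3))^(n-i) = (((-1:ℤ)^(n-i) : ℤ) : R3) := by push_cast; ring
    rw [h1, ← zsmul_eq_mul, mul_smul_comm, smul_mul_assoc]
    rw [AddMonoidAlgebra.single_mul_single, AddMonoidAlgebra.single_mul_single]
    simp
  rw [this, actD_zsmul_left, actD_single]
  simp [mul_smul, add_assoc]

-- ### Specialized binomial action formulas

lemma actD_sub_pow (g h : ℤ×ℤ×ℤ) (n : ℕ) (F : D3 M) (x : ℤ×ℤ×ℤ) :
    actD ((AddMonoidAlgebra.single g 1 - AddMonoidAlgebra.single h 1)^n) F x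
      = ∑ i ∈ range (n+1), ((-1:ℤ)^i * (n.choose i : ℤ)) • F (x + (n-i) • g + i • h) := by
  rw [actD_sub_pow']
  rw [← Finset.sum_range_reflect]
  refine Finset.sum_congr rfl fun j hj => ?_
  rw [Finset.mem_range] at hj
  have hj' : j ≤ n := by omega
  have h1 : n + 1 - 1 - j = n - j := by omega
  rw [h1]
  have h2 : n - (n - j) = j := by omega
  rw [h2, Nat.choose_symm hj']

lemma actD_ZW_pow (n : ℕ) (F : D3 M) (x : ℤ×ℤ×ℤ) :
    actD ((Zm - Wm)^n) F x
      = ∑ i ∈ range (n+1), ((-1:ℤ)^i * (n.choose i : ℤ)) •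
          F (x.1 + (n:ℤ) - i, x.2.1 + i, x.2.2) := by
  rw [Zm, Wm, actD_sub_pow]
  refine Finset.sum_congr rfl fun i hi => ?_
  rw [Finset.mem_range] at hi
  have h2 : ((n - i : ℕ) : ℤ) = (n:ℤ) - i := by omega
  have harg : ∀ g h' : ℤ×ℤ×ℤ, x + (n-i) • g + i • h'
      = (x.1 + ↑(n-i) * g.1 + i * h'.1, x.2.1 + ↑(n-i) * g.2.1 + i * h'.2.1,
         x.2.2 + ↑(n-i) * g.2.2 + i * h'.2.2) := by
    intro g h'
    refine Prod.ext ?_ (Prod.ext ?_ ?_) <;>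
      simp [Prod.smul_fst, Prod.smul_snd, smul_eq_mul]
  rw [harg]
  refine congrArg (fun y => ((-1:ℤ)^i * (n.choose i : ℤ)) • F y)
    (Prod.ext ?_ (Prod.ext ?_ ?_)) <;> simp [h2] <;> ring

lemma actD_ZX_pow (n : ℕ) (F : D3 M) (x : ℤ×ℤ×ℤ) :
    actD ((Zm - Xm)^n) F x
      = ∑ i ∈ range (n+1), ((-1:ℤ)^i * (n.choose i : ℤ)) •
          F (x.1 + (n:ℤ) - i, x.2.1, x.2.2 + i) := by
  rw [Zm, Xm, actD_sub_pow]
  refine Finset.sum_congr rfl fun i hi => ?_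
  rw [Finset.mem_range] at hi
  have h2 : ((n - i : ℕ) : ℤ) = (n:ℤ) - i := by omega
  have harg : ∀ g h' : ℤ×ℤ×ℤ, x + (n-i) • g + i • h'
      = (x.1 + ↑(n-i) * g.1 + i * h'.1, x.2.1 + ↑(n-i) * g.2.1 + i * h'.2.1,
         x.2.2 + ↑(n-i) * g.2.2 + i * h'.2.2) := by
    intro g h'
    refine Prod.ext ?_ (Prod.ext ?_ ?_) <;>
      simp [Prod.smul_fst, Prod.smul_snd, smul_eq_mul]
  rw [harg]
  refine congrArg (fun y => ((-1:ℤ)^i * (n.choose i : ℤ)) • F y)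
    (Prod.ext ?_ (Prod.ext ?_ ?_)) <;> simp [h2] <;> ring

lemma actD_WX_pow (n : ℕ) (F : D3 M) (x : ℤ×ℤ×ℤ) :
    actD ((Wm - Xm)^n) F x
      = ∑ i ∈ range (n+1), ((-1:ℤ)^i * (n.choose i : ℤ)) •
          F (x.1, x.2.1 + (n:ℤ) - i, x.2.2 + i) := by
  rw [Wm, Xm, actD_sub_pow]
  refine Finset.sum_congr rfl fun i hi => ?_
  rw [Finset.mem_range] at hi
  have h2 : ((n - i : ℕ) : ℤ) = (n:ℤ) - i := by omega
  have harg : ∀ g h' : ℤ×ℤ×ℤ, x + (n-i) • g + i • h'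
      = (x.1 + ↑(n-i) * g.1 + i * h'.1, x.2.1 + ↑(n-i) * g.2.1 + i * h'.2.1,
         x.2.2 + ↑(n-i) * g.2.2 + i * h'.2.2) := by
    intro g h'
    refine Prod.ext ?_ (Prod.ext ?_ ?_) <;>
      simp [Prod.smul_fst, Prod.smul_snd, smul_eq_mul]
  rw [harg]
  refine congrArg (fun y => ((-1:ℤ)^i * (n.choose i : ℤ)) • F y)
    (Prod.ext ?_ (Prod.ext ?_ ?_)) <;> simp [h2] <;> ring

-- ### Expansion operators

noncomputable def Ezw (m : ℤ) (F : D3 M) : D3 M := fun x =>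
  ∑ᶠ i : ℕ, Ei m i • F (x.1 + m - i, x.2.1 + i, x.2.2)

noncomputable def Ewz (m : ℤ) (F : D3 M) : D3 M := fun x =>
  ∑ᶠ i : ℕ, (msign m * Ei m i) • F (x.1 + i, x.2.1 + m - i, x.2.2)

def TrW (F : D3 M) : Prop := ∀ t : ℤ, ∃ s₀ : ℤ, ∀ r s : ℤ, s₀ ≤ s → F (r, s, t) = 0

def TrZ (F : D3 M) : Prop := ∀ t : ℤ, ∃ r₀ : ℤ, ∀ r s : ℤ, r₀ ≤ r → F (r, s, t) = 0

lemma TrW.van {F : D3 M} (hF : TrW F) (m : ℤ) (x : ℤ×ℤ×ℤ) :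
    ∃ I : ℕ, ∀ i : ℕ, I ≤ i → F (x.1 + m - i, x.2.1 + i, x.2.2) = 0 := by
  obtain ⟨s₀, h⟩ := hF x.2.2
  exact ⟨(s₀ - x.2.1).toNat, fun i hi => h _ _ (by omega)⟩

lemma TrZ.van {F : D3 M} (hF : TrZ F) (m : ℤ) (x : ℤ×ℤ×ℤ) :
    ∃ I : ℕ, ∀ i : ℕ, I ≤ i → F (x.1 + i, x.2.1 + m - i, x.2.2) = 0 := by
  obtain ⟨r₀, h⟩ := hF x.2.2
  exact ⟨(r₀ - x.1).toNat, fun i hi => h _ _ (by omega)⟩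

lemma Ezw_apply_eq (F : D3 M) (m : ℤ) (x : ℤ×ℤ×ℤ) {I : ℕ}
    (hI : ∀ i : ℕ, I ≤ i → F (x.1 + m - i, x.2.1 + i, x.2.2) = 0) :
    Ezw m F x = ∑ i ∈ range I, Ei m i • F (x.1 + m - i, x.2.1 + i, x.2.2) := by
  apply finsum_eq_sum_of_support_subset
  intro i hi
  simp only [Function.mem_support] at hi
  simp only [Finset.coe_range, Set.mem_Iio]
  by_contra h
  exact hi (by rw [hI i (by omega)]; simp)

lemma Ewz_apply_eq (F : D3 M) (m : ℤ) (x : ℤ×ℤ×ℤ) {I : ℕ}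
    (hI : ∀ i : ℕ, I ≤ i → F (x.1 + i, x.2.1 + m - i, x.2.2) = 0) :
    Ewz m F x = ∑ i ∈ range I, (msign m * Ei m i) • F (x.1 + i, x.2.1 + m - i, x.2.2) := by
  apply finsum_eq_sum_of_support_subset
  intro i hi
  simp only [Function.mem_support] at hi
  simp only [Finset.coe_range, Set.mem_Iio]
  by_contra h
  exact hi (by rw [hI i (by omega)]; simp)

/-- arbitrary shift-polynomials commute with the expansion operators -/
lemma actD_Ezw_comm {F : D3 M} (hF : TrW F) (f : R3) (m : ℤ) :
    actD f (Ezw m F) = Ezw m (actD f F) := by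
  funext x
  classical
  choose If hIf using fun g : ℤ×ℤ×ℤ => hF.van m (x + g)
  set Imax := f.coeff.support.sup If with hImax
  have hvan : ∀ g ∈ f.coeff.support, ∀ i : ℕ, Imax ≤ i →
      F ((x+g).1 + m - i, (x+g).2.1 + i, (x+g).2.2) = 0 := fun g hg i hi =>
    hIf g i (le_trans (Finset.le_sup hg) hi)
  have harg : ∀ (g : ℤ×ℤ×ℤ) (i : ℕ),
      ((x.1 + m - i, x.2.1 + i, x.2.2) + g : ℤ×ℤ×ℤ)
        = ((x+g).1 + m - i, (x+g).2.1 + i, (x+g).2.2) := by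
    intro g i
    refine Prod.ext ?_ (Prod.ext ?_ ?_) <;> simp <;> ring
  have hL : actD f (Ezw m F) x
      = f.coeff.sum fun g c => c • ∑ i ∈ range Imax, Ei m i •
          F ((x+g).1 + m - i, (x+g).2.1 + i, (x+g).2.2) := by
    rw [actD]
    apply Finsupp.sum_congr
    intro g hg
    rw [Ezw_apply_eq F m (x+g) (hvan g hg)]
  have hR : Ezw m (actD f F) x
      = ∑ i ∈ range Imax, Ei m i • (f.coeff.sum fun g c => c •
          F ((x+g).1 + m - i, (x+g).2.1 + i, (x+g).2.2)) := by
    rw [Ezw]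
    rw [finsum_eq_sum_of_support_subset _ (s := range Imax) ?_]
    · refine Finset.sum_congr rfl fun i _ => ?_
      congr 1
      rw [actD]
      apply Finsupp.sum_congr
      intro g hg
      rw [harg]
    · intro i hi
      simp only [Function.mem_support] at hi
      simp only [Finset.coe_range, Set.mem_Iio]
      by_contra h
      apply hi
      have : actD f F (x.1 + m - i, x.2.1 + i, x.2.2) = 0 := by
        rw [actD, Finsupp.sum]
        apply Finset.sum_eq_zero
        intro g hg
        rw [harg, hvan g hg i (by omega), smul_zero]
      rw [this, smul_zero]
  rw [hL, hR]
  simp_rw [Finsupp.sum, Finset.smul_sum]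
  rw [Finset.sum_comm]
  refine Finset.sum_congr rfl fun i _ => Finset.sum_congr rfl fun g hg => smul_comm _ _ _
  
lemma actD_Ewz_comm {F : D3 M} (hF : TrZ F) (f : R3) (m : ℤ) :
    actD f (Ewz m F) = Ewz m (actD f F) := by
  funext x
  classical
  choose If hIf using fun g : ℤ×ℤ×ℤ => hF.van m (x + g)
  set Imax := f.coeff.support.sup If with hImax
  have hvan : ∀ g ∈ f.coeff.support, ∀ i : ℕ, Imax ≤ i →
      F ((x+g).1 + i, (x+g).2.1 + m - i, (x+g).2.2) = 0 := fun g hg i hi =>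
    hIf g i (le_trans (Finset.le_sup hg) hi)
  have harg : ∀ (g : ℤ×ℤ×ℤ) (i : ℕ),
      ((x.1 + i, x.2.1 + m - i, x.2.2) + g : ℤ×ℤ×ℤ)
        = ((x+g).1 + i, (x+g).2.1 + m - i, (x+g).2.2) := by
    intro g i
    refine Prod.ext ?_ (Prod.ext ?_ ?_) <;> simp <;> ring
  have hL : actD f (Ewz m F) x
      = f.coeff.sum fun g c => c • ∑ i ∈ range Imax, (msign m * Ei m i) •
          F ((x+g).1 + i, (x+g).2.1 + m - i, (x+g).2.2) := by
    rw [actD]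
    apply Finsupp.sum_congr
    intro g hg
    rw [Ewz_apply_eq F m (x+g) (hvan g hg)]
  have hR : Ewz m (actD f F) x
      = ∑ i ∈ range Imax, (msign m * Ei m i) • (f.coeff.sum fun g c => c •
          F ((x+g).1 + i, (x+g).2.1 + m - i, (x+g).2.2)) := by
    rw [Ewz]
    rw [finsum_eq_sum_of_support_subset _ (s := range Imax) ?_]
    · refine Finset.sum_congr rfl fun i _ => ?_
      congr 1
      rw [actD]
      apply Finsupp.sum_congr
      intro g hg
      rw [harg]
    · intro i hi
      simp only [Function.mem_support] at hi
      simp only [Finset.coe_range, Set.mem_Iio]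
      by_contra h
      apply hi
      have : actD f F (x.1 + i, x.2.1 + m - i, x.2.2) = 0 := by
        rw [actD, Finsupp.sum]
        apply Finset.sum_eq_zero
        intro g hg
        rw [harg, hvan g hg i (by omega), smul_zero]
      rw [this, smul_zero]
  rw [hL, hR]
  simp_rw [Finsupp.sum, Finset.smul_sum]
  rw [Finset.sum_comm]
  refine Finset.sum_congr rfl fun i _ => Finset.sum_congr rfl fun g hg => smul_comm _ _ _

lemma F_congr (F : D3 M) {y z : ℤ×ℤ×ℤ} (h1 : y.1 = z.1) (h2 : y.2.1 = z.2.1)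
    (h3 : y.2.2 = z.2.2) : F y = F z :=
  congrArg F (Prod.ext h1 (Prod.ext h2 h3))

lemma actD_ZWm_Ezw {F : D3 M} (hF : TrW F) (m : ℤ) :
    actD (Zm - Wm) (Ezw m F) = Ezw (m+1) F := by
  funext x
  have hstep : actD (Zm - Wm) (Ezw m F) x
      = Ezw m F (x + ((1:ℤ),(0:ℤ),(0:ℤ))) - Ezw m F (x + ((0:ℤ),(1:ℤ),(0:ℤ))) := by
    rw [Zm, Wm, actD_sub_single]
  obtain ⟨I1, hI1⟩ := hF.van m (x + ((1:ℤ),(0:ℤ),(0:ℤ)))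
  obtain ⟨I2, hI2⟩ := hF.van m (x + ((0:ℤ),(1:ℤ),(0:ℤ)))
  obtain ⟨I3, hI3⟩ := hF.van (m+1) x
  set J := max I1 (max I2 I3) with hJ
  set Fi : ℕ → M := fun i => F (x.1 + (m+1) - i, x.2.1 + i, x.2.2) with hFi
  have hFiz : ∀ i : ℕ, I3 ≤ i → Fi i = 0 := fun i hi => hI3 i hi
  have hT1 : Ezw m F (x + ((1:ℤ),(0:ℤ),(0:ℤ))) = ∑ i ∈ range (J+1), Ei m i • Fi i := by
    rw [Ezw_apply_eq F m _ (I := J+1) (fun i hi => hI1 i (by omega))]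
    refine Finset.sum_congr rfl fun i _ => ?_
    congr 1
    exact F_congr F (by simp; ring) (by simp) (by simp)
  have hT2 : Ezw m F (x + ((0:ℤ),(1:ℤ),(0:ℤ))) = ∑ i ∈ range (J+1), Ei m i • Fi (i+1) := by
    rw [Ezw_apply_eq F m _ (I := J+1) (fun i hi => hI2 i (by omega))]
    refine Finset.sum_congr rfl fun i _ => ?_
    congr 1
    exact F_congr F (by simp; push_cast; ring) (by simp; push_cast; ring) (by simp)
  have hS : Ezw (m+1) F x = ∑ i ∈ range (J+1), Ei (m+1) i • Fi i :=
    Ezw_apply_eq F (m+1) x (I := J+1) (fun i hi => hI3 i (by omega))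
  rw [hstep, hT1, hT2, hS]
  rw [Finset.sum_range_succ' (fun i => Ei m i • Fi i) J]
  rw [Finset.sum_range_succ (fun i => Ei m i • Fi (i+1)) J]
  rw [Finset.sum_range_succ' (fun i => Ei (m+1) i • Fi i) J]
  rw [hFiz (J+1) (by omega), smul_zero, add_zero]
  simp only [Ei_zero, one_smul]
  have hterm : ∀ k : ℕ, Ei (m+1) (k+1) • Fi (k+1)
      = Ei m (k+1) • Fi (k+1) - Ei m k • Fi (k+1) := by
    intro k; rw [Ei_succ, sub_smul]
  simp_rw [hterm]
  rw [Finset.sum_sub_distrib]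
  abel

lemma actD_ZWm_Ewz {F : D3 M} (hF : TrZ F) (m : ℤ) :
    actD (Zm - Wm) (Ewz m F) = Ewz (m+1) F := by
  funext x
  have hstep : actD (Zm - Wm) (Ewz m F) x
      = Ewz m F (x + ((1:ℤ),(0:ℤ),(0:ℤ))) - Ewz m F (x + ((0:ℤ),(1:ℤ),(0:ℤ))) := by
    rw [Zm, Wm, actD_sub_single]
  obtain ⟨I1, hI1⟩ := hF.van m (x + ((1:ℤ),(0:ℤ),(0:ℤ)))
  obtain ⟨I2, hI2⟩ := hF.van m (x + ((0:ℤ),(1:ℤ),(0:ℤ)))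
  obtain ⟨I3, hI3⟩ := hF.van (m+1) x
  set J := max I1 (max I2 I3) with hJ
  set Gi : ℕ → M := fun i => F (x.1 + i, x.2.1 + (m+1) - i, x.2.2) with hGi
  have hGiz : ∀ i : ℕ, I3 ≤ i → Gi i = 0 := fun i hi => hI3 i hi
  have hT1 : Ewz m F (x + ((1:ℤ),(0:ℤ),(0:ℤ)))
      = ∑ i ∈ range (J+1), (msign m * Ei m i) • Gi (i+1) := by
    rw [Ewz_apply_eq F m _ (I := J+1) (fun i hi => hI1 i (by omega))]
    refine Finset.sum_congr rfl fun i _ => ?_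
    congr 1
    exact F_congr F (by simp; push_cast; ring) (by simp; push_cast; ring) (by simp)
  have hT2 : Ewz m F (x + ((0:ℤ),(1:ℤ),(0:ℤ)))
      = ∑ i ∈ range (J+1), (msign m * Ei m i) • Gi i := by
    rw [Ewz_apply_eq F m _ (I := J+1) (fun i hi => hI2 i (by omega))]
    refine Finset.sum_congr rfl fun i _ => ?_
    congr 1
    exact F_congr F (by simp) (by simp; ring) (by simp)
  have hS : Ewz (m+1) F x = ∑ i ∈ range (J+1), (msign (m+1) * Ei (m+1) i) • Gi i :=
    Ewz_apply_eq F (m+1) x (I := J+1) (fun i hi => hI3 i (by omega))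
  rw [hstep, hT1, hT2, hS]
  rw [Finset.sum_range_succ (fun i => (msign m * Ei m i) • Gi (i+1)) J]
  rw [Finset.sum_range_succ' (fun i => (msign m * Ei m i) • Gi i) J]
  rw [Finset.sum_range_succ' (fun i => (msign (m+1) * Ei (m+1) i) • Gi i) J]
  rw [hGiz (J+1) (by omega), smul_zero, add_zero]
  simp only [Ei_zero, mul_one]
  rw [msign_add_one]
  have hterm : ∀ k : ℕ, (-msign m * Ei (m+1) (k+1)) • Gi (k+1)
      = (msign m * Ei m k) • Gi (k+1) - (msign m * Ei m (k+1)) • Gi (k+1) := by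
    intro k
    rw [Ei_succ, ← sub_smul]
    congr 1
    ring
  simp_rw [hterm]
  rw [Finset.sum_sub_distrib, neg_smul]
  abel

lemma actD_ZW_pow_Ezw {F : D3 M} (hF : TrW F) (n : ℕ) (m : ℤ) :
    actD ((Zm - Wm)^n) (Ezw m F) = Ezw (m + n) F := by
  induction n with
  | zero => rw [pow_zero, actD_one]; norm_num
  | succ n ih =>
    rw [pow_succ', actD_mul, ih, actD_ZWm_Ezw hF]
    congr 1
    push_cast; ring

lemma actD_ZW_pow_Ewz {F : D3 M} (hF : TrZ F) (n : ℕ) (m : ℤ) :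
    actD ((Zm - Wm)^n) (Ewz m F) = Ewz (m + n) F := by
  induction n with
  | zero => rw [pow_zero, actD_one]; norm_num
  | succ n ih =>
    rw [pow_succ', actD_mul, ih, actD_ZWm_Ewz hF]
    congr 1
    push_cast; ring

lemma neg_one_pow_sub (n j : ℕ) (h : j ≤ n) : ((-1:ℤ))^(n-j) = (-1)^n * (-1)^j := by
  have h1 : ((-1:ℤ))^(n-j) * (-1)^j = (-1)^n := by rw [← pow_add, Nat.sub_add_cancel h]
  have h2 : ((-1:ℤ))^j * (-1)^j = 1 := by
    rw [← pow_add]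
    exact Even.neg_one_pow ⟨j, rfl⟩
  calc ((-1:ℤ))^(n-j) = (-1)^(n-j) * ((-1)^j * (-1)^j) := by rw [h2, mul_one]
    _ = ((-1)^(n-j) * (-1)^j) * (-1)^j := by ring
    _ = (-1)^n * (-1)^j := by rw [h1]

lemma Ezw_natCast (F : D3 M) (n : ℕ) : Ezw (n : ℤ) F = actD ((Zm - Wm)^n) F := by
  funext x
  rw [Ezw, actD_ZW_pow]
  rw [finsum_eq_sum_of_support_subset _ (s := range (n+1)) ?_]
  · exact Finset.sum_congr rfl fun i hi => by rw [Ei_natCast]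
  · intro i hi
    simp only [Function.mem_support] at hi
    simp only [Finset.coe_range, Set.mem_Iio]
    by_contra h
    exact hi (by rw [Ei_natCast_eq_zero n i (by omega), zero_smul])

lemma Ewz_natCast (F : D3 M) (n : ℕ) : Ewz (n : ℤ) F = actD ((Zm - Wm)^n) F := by
  funext x
  rw [Ewz, actD_ZW_pow]
  rw [finsum_eq_sum_of_support_subset _ (s := range (n+1)) ?_]
  · rw [← Finset.sum_range_reflect]
    refine Finset.sum_congr rfl fun j hj => ?_
    rw [Finset.mem_range] at hj
    have hj' : j ≤ n := by omega
    have h1 : n + 1 - 1 - j = n - j := by omega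
    rw [h1]
    have hco : msign (n:ℤ) * Ei (n:ℤ) (n-j) = ((-1:ℤ))^j * ((n.choose j) : ℤ) := by
      have h2 : ((-1:ℤ))^n * (-1)^n = 1 := by
        rw [← pow_add]; exact Even.neg_one_pow ⟨n, rfl⟩
      calc msign (n:ℤ) * Ei (n:ℤ) (n-j)
          = ((-1:ℤ))^n * ((-1)^(n-j) * (n.choose (n-j) : ℤ)) := by
            rw [msign_natCast, Ei_natCast]
        _ = ((-1:ℤ))^n * (((-1)^n * (-1)^j) * (n.choose j : ℤ)) := by
            rw [Nat.choose_symm hj', neg_one_pow_sub n j hj']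
        _ = (((-1:ℤ))^n * (-1)^n) * ((-1)^j * (n.choose j:ℤ)) := by ring
        _ = ((-1:ℤ))^j * (n.choose j : ℤ) := by rw [h2, one_mul]
    rw [hco]
    congr 1
    refine F_congr F ?_ ?_ ?_ <;> simp <;> omega
  · intro i hi
    simp only [Function.mem_support] at hi
    simp only [Finset.coe_range, Set.mem_Iio]
    by_contra h
    exact hi (by rw [Ei_natCast_eq_zero n i (by omega), mul_zero, zero_smul])


lemma actD_eq_of_pow_sub_zero {P : R3} {u w : ℕ} (h : u ≤ w) {F G : D3 M}
    (hz : actD (P^u) (F - G) = 0) : actD (P^w) F = actD (P^w) G := by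
  have hw : (P:R3)^w = P^(w-u) * P^u := by rw [← pow_add]; congr 1; omega
  have h2 : actD (P^w) F - actD (P^w) G = 0 := by
    rw [← actD_sub_right, hw, actD_mul, hz, actD_zero_right]
  rw [← sub_eq_zero]
  exact h2

section Kill

variable (F1 F2 F3 F4 F5 F6 : D3 M) (a b c : ℕ)
variable (hab1 : actD ((Zm-Wm)^c) (F1 - F2) = 0) (hab2 : actD ((Zm-Wm)^c) (F3 - F4) = 0)
variable (hac1 : actD ((Zm-Xm)^a) (F5 - F3) = 0) (hac2 : actD ((Zm-Xm)^a) (F2 - F6) = 0)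
variable (hbc1 : actD ((Wm-Xm)^b) (F1 - F5) = 0) (hbc2 : actD ((Wm-Xm)^b) (F6 - F4) = 0)

include hab1 hab2 hac1 hac2 in
lemma kill_ca :
    actD ((Zm-Wm)^c * (Zm-Xm)^a) (F1 - F5 - (F6 - F4)) = 0 := by
  have hX0 : F1 - F5 - (F6 - F4) = (F1 - F2 - (F3 - F4)) + ((F2 - F6) - (F5 - F3)) := by
    abel
  rw [hX0, actD_add_right]
  have t1 : actD ((Zm-Wm)^c * (Zm-Xm)^a) (F1 - F2 - (F3 - F4)) = 0 := by
    rw [mul_comm, actD_mul, actD_sub_right, hab1, hab2, sub_zero, actD_zero_right]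
  have t2 : actD ((Zm-Wm)^c * (Zm-Xm)^a) ((F2 - F6) - (F5 - F3)) = 0 := by
    rw [actD_mul, actD_sub_right, hac2, hac1, sub_zero, actD_zero_right]
  rw [t1, t2, add_zero]

include hab1 hab2 hac1 hac2 hbc1 hbc2 in
lemma kill (α β : ℕ) (hα : a + c ≤ α) (hαβ : a + b + c ≤ α + β + 1) :
    actD ((Wm-Xm)^β * (Zm-Wm)^α) (F1 - F5 - (F6 - F4)) = 0 := by
  have hbX0 : actD ((Wm-Xm)^b) (F1 - F5 - (F6 - F4)) = 0 := by
    rw [actD_sub_right, hbc1, hbc2, sub_zero]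
  have hsplit : ((Zm-Wm):R3)^α = (Zm-Wm)^(α-c) * (Zm-Wm)^c := by
    rw [← pow_add]; congr 1; omega
  have hzw : ((Zm-Wm):R3) = (Zm-Xm) + (Xm-Wm) := by ring
  have hexp : ((Zm-Wm):R3)^(α-c)
      = ∑ ρ ∈ range (α-c+1), (Zm-Xm)^ρ * (Xm-Wm)^(α-c-ρ) * (((α-c).choose ρ : ℕ) : R3) := by
    rw [hzw, (Commute.all _ _).add_pow]
  rw [hsplit, hexp, Finset.sum_mul, Finset.mul_sum, actD_sum_left]
  apply Finset.sum_eq_zero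
  intro ρ hρ
  rw [Finset.mem_range] at hρ
  by_cases hρa : a ≤ ρ
  · have hre : ((Wm-Xm):R3)^β * ((Zm-Xm)^ρ * (Xm-Wm)^(α-c-ρ) * (((α-c).choose ρ : ℕ) : R3)
        * (Zm-Wm)^c)
        = ((Wm-Xm)^β * (Xm-Wm)^(α-c-ρ) * (((α-c).choose ρ : ℕ) : R3) * (Zm-Xm)^(ρ-a))
          * ((Zm-Wm)^c * (Zm-Xm)^a) := by
      rw [show ((Zm-Xm):R3)^ρ = (Zm-Xm)^(ρ-a) * (Zm-Xm)^a from by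
        rw [← pow_add]; congr 1; omega]
      ring
    rw [hre, actD_mul, kill_ca F1 F2 F3 F4 F5 F6 a c hab1 hab2 hac1 hac2, actD_zero_right]
  · have hb : b ≤ β + (α-c-ρ) := by omega
    have hxw : ((Xm-Wm):R3) = -(Wm-Xm) := by ring
    have hfix : ((Wm-Xm):R3)^β * (Wm-Xm)^(α-c-ρ) = (Wm-Xm)^(β+(α-c-ρ)-b) * (Wm-Xm)^b := by
      rw [← pow_add, ← pow_add]; congr 1; omega
    have hre : ((Wm-Xm):R3)^β * ((Zm-Xm)^ρ * (Xm-Wm)^(α-c-ρ) * (((α-c).choose ρ : ℕ) : R3)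
        * (Zm-Wm)^c)
        = ((-1)^(α-c-ρ) * (Zm-Xm)^ρ * (((α-c).choose ρ : ℕ) : R3) * (Zm-Wm)^c
            * (Wm-Xm)^(β+(α-c-ρ)-b)) * (Wm-Xm)^b := by
      calc ((Wm-Xm):R3)^β * ((Zm-Xm)^ρ * (Xm-Wm)^(α-c-ρ) * (((α-c).choose ρ : ℕ) : R3)
              * (Zm-Wm)^c)
          = ((Wm-Xm)^β * (Wm-Xm)^(α-c-ρ)) *
              ((-1)^(α-c-ρ) * (Zm-Xm)^ρ * (((α-c).choose ρ : ℕ) : R3) * (Zm-Wm)^c) := by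
            rw [hxw, neg_pow]; ring
        _ = ((Wm-Xm)^(β+(α-c-ρ)-b) * (Wm-Xm)^b) *
              ((-1)^(α-c-ρ) * (Zm-Xm)^ρ * (((α-c).choose ρ : ℕ) : R3) * (Zm-Wm)^c) := by
            rw [hfix]
        _ = ((-1)^(α-c-ρ) * (Zm-Xm)^ρ * (((α-c).choose ρ : ℕ) : R3) * (Zm-Wm)^c
            * (Wm-Xm)^(β+(α-c-ρ)-b)) * (Wm-Xm)^b := by ring
    rw [hre, actD_mul, hbX0, actD_zero_right]

end Kill

section Dong

lemma dong (F1 F2 F3 F4 F5 F6 : D3 M) (a b c : ℕ)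
    (hW1 : TrW F1) (hW3 : TrW F3) (hW5 : TrW F5)
    (hZ2 : TrZ F2) (hZ4 : TrZ F4) (hZ6 : TrZ F6)
    (hab1 : actD ((Zm-Wm)^c) (F1 - F2) = 0) (hab2 : actD ((Zm-Wm)^c) (F3 - F4) = 0)
    (hac1 : actD ((Zm-Xm)^a) (F5 - F3) = 0) (hac2 : actD ((Zm-Xm)^a) (F2 - F6) = 0)
    (hbc1 : actD ((Wm-Xm)^b) (F1 - F5) = 0) (hbc2 : actD ((Wm-Xm)^b) (F6 - F4) = 0)
    (m : ℤ) (N : ℕ) (hmc : m < c) (hN : (N:ℤ) = a + b + c - m - 1) :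
    actD ((Wm-Xm)^N) (Ezw m F1 - Ewz m F2 - (Ezw m F3 - Ewz m F4)) = 0 := by
  have hwx : ((Wm-Xm):R3) = (Wm-Zm) + (Zm-Xm) := by ring
  rw [hwx, (Commute.all _ _).add_pow, actD_sum_left]
  apply Finset.sum_eq_zero
  intro σ hσ
  rw [Finset.mem_range] at hσ
  have hterm : ((Wm-Zm):R3)^σ * (Zm-Xm)^(N-σ) * ((N.choose σ : ℕ) : R3)
      = ((-1)^σ * ((N.choose σ : ℕ) : R3) * (Zm-Xm)^(N-σ)) * (Zm-Wm)^σ := by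
    rw [show ((Wm-Zm):R3) = -(Zm-Wm) from by ring, neg_pow]
    ring
  rw [hterm, actD_mul]
  have habs : actD ((Zm-Wm)^σ) (Ezw m F1 - Ewz m F2 - (Ezw m F3 - Ewz m F4))
      = Ezw (m+σ) F1 - Ewz (m+σ) F2 - (Ezw (m+σ) F3 - Ewz (m+σ) F4) := by
    rw [actD_sub_right, actD_sub_right, actD_sub_right, actD_ZW_pow_Ezw hW1,
      actD_ZW_pow_Ewz hZ2, actD_ZW_pow_Ezw hW3, actD_ZW_pow_Ewz hZ4]
  rw [habs]
  by_cases hcase : (c:ℤ) ≤ m + σ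
  · set n' := (m + (σ:ℤ)).toNat with hn'def
    have hn'' : ((n':ℕ):ℤ) = m + σ := Int.toNat_of_nonneg (by omega)
    have hrw : Ezw (m+(σ:ℤ)) F1 - Ewz (m+(σ:ℤ)) F2 - (Ezw (m+(σ:ℤ)) F3 - Ewz (m+(σ:ℤ)) F4)
        = actD ((Zm-Wm)^n') (F1 - F2 - (F3 - F4)) := by
      rw [← hn'', Ezw_natCast, Ewz_natCast, Ezw_natCast, Ewz_natCast]
      simp only [actD_sub_right]
    rw [hrw]
    have h0 : actD ((Zm-Wm)^n') (F1 - F2 - (F3 - F4)) = 0 := by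
      rw [show ((Zm-Wm):R3)^n' = (Zm-Wm)^(n'-c) * (Zm-Wm)^c from by
        rw [← pow_add]; congr 1; omega]
      rw [actD_mul, actD_sub_right, hab1, hab2, sub_zero, actD_zero_right]
    rw [h0, actD_zero_right]
  · have haK : a + b ≤ N - σ := by omega
    have hgroup : Ezw (m+(σ:ℤ)) F1 - Ewz (m+(σ:ℤ)) F2
          - (Ezw (m+(σ:ℤ)) F3 - Ewz (m+(σ:ℤ)) F4)
        = (Ezw (m+(σ:ℤ)) F1 - Ezw (m+(σ:ℤ)) F5 - (Ewz (m+(σ:ℤ)) F6 - Ewz (m+(σ:ℤ)) F4))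
          + (Ezw (m+(σ:ℤ)) F5 - Ezw (m+(σ:ℤ)) F3
            - (Ewz (m+(σ:ℤ)) F2 - Ewz (m+(σ:ℤ)) F6)) := by
      abel
    rw [hgroup, actD_add_right]
    have hsplitf : ((-1:R3))^σ * ((N.choose σ : ℕ) : R3) * (Zm-Xm)^(N-σ)
        = ((-1)^σ * ((N.choose σ : ℕ) : R3)) * (Zm-Xm)^(N-σ) := by ring
    have hzero2 : actD ((-1)^σ * ((N.choose σ : ℕ) : R3) * (Zm-Xm)^(N-σ))
        (Ezw (m+(σ:ℤ)) F5 - Ezw (m+(σ:ℤ)) F3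
          - (Ewz (m+(σ:ℤ)) F2 - Ewz (m+(σ:ℤ)) F6)) = 0 := by
      rw [hsplitf, actD_mul]
      have hinner2 : actD (((Zm:R3)-Xm)^(N-σ))
          (Ezw (m+(σ:ℤ)) F5 - Ezw (m+(σ:ℤ)) F3
            - (Ewz (m+(σ:ℤ)) F2 - Ewz (m+(σ:ℤ)) F6)) = 0 := by
        rw [actD_sub_right, actD_sub_right, actD_sub_right]
        rw [actD_Ezw_comm hW5, actD_Ezw_comm hW3, actD_Ewz_comm hZ2, actD_Ewz_comm hZ6]
        rw [actD_eq_of_pow_sub_zero (by omega : a ≤ N - σ) hac1]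
        rw [actD_eq_of_pow_sub_zero (by omega : a ≤ N - σ) hac2]
        simp only [sub_self, sub_zero]
      rw [hinner2, actD_zero_right]
    have hzero1 : actD ((-1)^σ * ((N.choose σ : ℕ) : R3) * (Zm-Xm)^(N-σ))
        (Ezw (m+(σ:ℤ)) F1 - Ezw (m+(σ:ℤ)) F5
          - (Ewz (m+(σ:ℤ)) F6 - Ewz (m+(σ:ℤ)) F4)) = 0 := by
      rw [hsplitf, actD_mul]
      have hinner : actD (((Zm:R3)-Xm)^(N-σ))
          (Ezw (m+(σ:ℤ)) F1 - Ezw (m+(σ:ℤ)) F5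
            - (Ewz (m+(σ:ℤ)) F6 - Ewz (m+(σ:ℤ)) F4)) = 0 := by
        rw [show ((Zm-Xm):R3) = (Zm-Wm) + (Wm-Xm) from by ring, (Commute.all _ _).add_pow,
          actD_sum_left]
        apply Finset.sum_eq_zero
        intro τ hτ
        rw [Finset.mem_range] at hτ
        by_cases hτb : b ≤ N-σ-τ
        · rw [show ((Zm-Wm):R3)^τ * (Wm-Xm)^(N-σ-τ) * (((N-σ).choose τ : ℕ) : R3)
              = ((Zm-Wm)^τ * (((N-σ).choose τ : ℕ) : R3)) * (Wm-Xm)^(N-σ-τ) from by ring,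
            actD_mul]
          have h1 : actD (((Wm:R3)-Xm)^(N-σ-τ))
              (Ezw (m+(σ:ℤ)) F1 - Ezw (m+(σ:ℤ)) F5
                - (Ewz (m+(σ:ℤ)) F6 - Ewz (m+(σ:ℤ)) F4)) = 0 := by
            rw [actD_sub_right, actD_sub_right, actD_sub_right]
            rw [actD_Ezw_comm hW1, actD_Ezw_comm hW5, actD_Ewz_comm hZ6, actD_Ewz_comm hZ4]
            rw [actD_eq_of_pow_sub_zero hτb hbc1, actD_eq_of_pow_sub_zero hτb hbc2]
            simp only [sub_self, sub_zero, actD_zero_right]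
          rw [h1, actD_zero_right]
        · set nτ := (m + (σ:ℤ) + (τ:ℤ)).toNat with hnτdef
          have hnτ : ((nτ:ℕ):ℤ) = m + σ + τ := Int.toNat_of_nonneg (by omega)
          rw [show ((Zm-Wm):R3)^τ * (Wm-Xm)^(N-σ-τ) * (((N-σ).choose τ : ℕ) : R3)
              = ((((N-σ).choose τ : ℕ) : R3) * (Wm-Xm)^(N-σ-τ)) * (Zm-Wm)^τ from by ring,
            actD_mul]
          have habs2 : actD (((Zm:R3)-Wm)^τ)
              (Ezw (m+(σ:ℤ)) F1 - Ezw (m+(σ:ℤ)) F5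
                - (Ewz (m+(σ:ℤ)) F6 - Ewz (m+(σ:ℤ)) F4))
              = actD ((Zm-Wm)^nτ) (F1 - F5 - (F6 - F4)) := by
            rw [actD_sub_right, actD_sub_right, actD_sub_right, actD_ZW_pow_Ezw hW1,
              actD_ZW_pow_Ezw hW5, actD_ZW_pow_Ewz hZ6, actD_ZW_pow_Ewz hZ4]
            rw [show m + (σ:ℤ) + (τ:ℤ) = ((nτ:ℕ):ℤ) from hnτ.symm]
            rw [Ezw_natCast, Ezw_natCast, Ewz_natCast, Ewz_natCast]
            simp only [actD_sub_right]
          rw [habs2, actD_mul, ← actD_mul ((Wm-Xm)^(N-σ-τ)) ((Zm-Wm)^nτ)]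
          rw [kill F1 F2 F3 F4 F5 F6 a b c hab1 hab2 hac1 hac2 hbc1 hbc2 nτ (N-σ-τ)
            (by omega) (by omega)]
          simp only [actD_zero_right]
      rw [hinner, actD_zero_right]
    rw [hzero1, hzero2, add_zero]

end Dong


/-- bundled modes -/
def serHom (A : Ser M) (hlA : IsLinSer (k := k) A) (n : ℤ) : M →+ M :=
  AddMonoidHom.mk' (A n) (fun x y => (hlA n).map_add x y)

lemma serHom_apply (A : Ser M) (hlA : IsLinSer (k := k) A) (n : ℤ) (u : M) :
    serHom (k := k) A hlA n u = A n u := rfl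

lemma flip_sum (G : ℤ → ℤ → M) (n : ℕ) (p q : ℤ) :
    ∑ i ∈ range (n+1), ((-1:ℤ)^i * (n.choose i:ℤ)) •
        ((-1:ℤ)^n • G (p + (n:ℤ) - i) (q + i))
      = ∑ i ∈ range (n+1), ((-1:ℤ)^i * (n.choose i:ℤ)) • G (p + i) (q + (n:ℤ) - i) := by
  rw [← Finset.sum_range_reflect]
  refine Finset.sum_congr rfl fun j hj => ?_
  rw [Finset.mem_range] at hj
  have hj' : j ≤ n := by omega
  rw [show n + 1 - 1 - j = n - j from by omega]
  rw [Nat.choose_symm hj', neg_one_pow_sub n j hj']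
  have ha1 : p + (n:ℤ) - ((n-j:ℕ):ℤ) = p + j := by omega
  have ha2 : q + ((n-j:ℕ):ℤ) = q + (n:ℤ) - j := by omega
  rw [ha1, ha2, smul_smul]
  congr 1
  have h2 : ((-1:ℤ))^n * (-1)^n = 1 := by
    rw [← pow_add]; exact Even.neg_one_pow ⟨n, rfl⟩
  calc ((-1:ℤ))^n * (-1)^j * (n.choose j:ℤ) * (-1)^n
      = ((-1:ℤ)^n * (-1)^n) * ((-1)^j * (n.choose j:ℤ)) := by ring
    _ = (-1:ℤ)^j * (n.choose j:ℤ) := by rw [h2, one_mul]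

lemma local_symm {A B : Ser M} {n : ℕ} (h : IsLocalAt A B n) :
    ∀ (p q : ℤ) (u : M),
      ∑ i ∈ range (n+1), ((-1:ℤ)^i * (n.choose i:ℤ)) •
        (A (p + (n:ℤ) - i) (B (q + i) u) - B (q + i) (A (p + (n:ℤ) - i) u)) = 0 := by
  intro p q u
  have h0 := h p q u
  have hflip : ∑ i ∈ range (n+1), ((-1:ℤ)^i * (n.choose i:ℤ)) •
        ((-1:ℤ)^n • B (q + (n:ℤ) - i) (A (p + i) u))
      = ∑ i ∈ range (n+1), ((-1:ℤ)^i * (n.choose i:ℤ)) •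
        (B (q + i) (A (p + (n:ℤ) - i) u)) :=
    flip_sum (fun x y => B x (A y u)) n q p
  calc ∑ i ∈ range (n+1), ((-1:ℤ)^i * (n.choose i:ℤ)) •
        (A (p + (n:ℤ) - i) (B (q + i) u) - B (q + i) (A (p + (n:ℤ) - i) u))
      = ∑ i ∈ range (n+1), (((-1:ℤ)^i * (n.choose i:ℤ)) •
          A (p + (n:ℤ) - i) (B (q + i) u)
          - ((-1:ℤ)^i * (n.choose i:ℤ)) • B (q + i) (A (p + (n:ℤ) - i) u)) := by
        refine Finset.sum_congr rfl fun i _ => smul_sub _ _ _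
    _ = ∑ i ∈ range (n+1), ((-1:ℤ)^i * (n.choose i:ℤ)) • A (p + (n:ℤ) - i) (B (q + i) u)
          - ∑ i ∈ range (n+1), ((-1:ℤ)^i * (n.choose i:ℤ)) •
              B (q + i) (A (p + (n:ℤ) - i) u) := Finset.sum_sub_distrib _ _
    _ = ∑ i ∈ range (n+1), ((-1:ℤ)^i * (n.choose i:ℤ)) • A (p + (n:ℤ) - i) (B (q + i) u)
          - ∑ i ∈ range (n+1), ((-1:ℤ)^i * (n.choose i:ℤ)) •
              ((-1:ℤ)^n • B (q + (n:ℤ) - i) (A (p + i) u)) := by rw [hflip]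
    _ = ∑ i ∈ range (n+1), (((-1:ℤ)^i * (n.choose i:ℤ)) •
          A (p + (n:ℤ) - i) (B (q + i) u)
          - ((-1:ℤ)^i * (n.choose i:ℤ)) •
              ((-1:ℤ)^n • B (q + (n:ℤ) - i) (A (p + i) u))) := (Finset.sum_sub_distrib _ _).symm
    _ = ∑ i ∈ range (n+1), ((-1:ℤ)^i * (n.choose i:ℤ)) •
          (A (p + (n:ℤ) - i) (B (q + i) u)
            - (-1:ℤ)^n • B (q + (n:ℤ) - i) (A (p + i) u)) := by
        refine Finset.sum_congr rfl fun i _ => (smul_sub _ _ _).symm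
    _ = 0 := h0

lemma supp1 {A B : Ser M} (hB : IsFieldSer B) (m n : ℤ) (u : M)
    (hz : ∀ r : ℤ, A r 0 = 0) :
    (Function.support fun i : ℕ => Ei m i • A (m - i) (B (n + i) u)).Finite := by
  obtain ⟨s₀, hs⟩ := hB u
  apply Set.Finite.subset (Finset.range (s₀ - n).toNat).finite_toSet
  intro i hi
  simp only [Function.mem_support] at hi
  simp only [Finset.coe_range, Set.mem_Iio]
  by_contra hc
  exact hi (by rw [hs (n + i) (by omega), hz, smul_zero])

lemma supp2 {A B : Ser M} (hA : IsFieldSer A) (m n : ℤ) (u : M)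
    (hz : ∀ r : ℤ, B r 0 = 0) :
    (Function.support fun i : ℕ =>
      (msign m * Ei m i) • B (m + n - i) (A i u)).Finite := by
  obtain ⟨r₀, hr⟩ := hA u
  apply Set.Finite.subset (Finset.range r₀.toNat).finite_toSet
  intro i hi
  simp only [Function.mem_support] at hi
  simp only [Finset.coe_range, Set.mem_Iio]
  by_contra hc
  exact hi (by rw [hr (i:ℤ) (by omega), hz, smul_zero])

lemma resProd_modes {A B : Ser M} (hA : IsFieldSer A) (hB : IsFieldSer B)
    (hzA : ∀ r : ℤ, A r 0 = 0) (hzB : ∀ r : ℤ, B r 0 = 0) (m n : ℤ) (u : M) :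
    resProd A B m n u
      = (∑ᶠ i : ℕ, Ei m i • A (m - i) (B (n + i) u))
        - ∑ᶠ i : ℕ, (msign m * Ei m i) • B (m + n - i) (A i u) := by
  rw [resProd]
  have h1 : ∀ i : ℕ, ((-1:ℤ)^i * ichoose m i) •
      (A (m - i) (B (n + i) u) - msign m • B (m + n - i) (A i u))
      = Ei m i • A (m - i) (B (n + i) u)
        - (msign m * Ei m i) • B (m + n - i) (A i u) := by
    intro i
    have he : (-1:ℤ)^i * ichoose m i = Ei m i := rfl
    rw [smul_sub, smul_smul, he, mul_comm (Ei m i) (msign m)]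
  simp_rw [h1]
  exact finsum_sub_distrib (supp1 hB m n u hzA) (supp2 hA m n u hzB)

lemma key_local (A B C : Ser M)
    (hA : IsFieldSer A) (hB : IsFieldSer B) (hC : IsFieldSer C)
    (hlA : IsLinSer (k := k) A) (hlB : IsLinSer (k := k) B) (hlC : IsLinSer (k := k) C)
    (k₀ l₀ m₀ : ℕ) (hAC : IsLocalAt A C k₀) (hBC : IsLocalAt B C l₀)
    (hAB : IsLocalAt A B m₀)
    (m : ℤ) (hm : m < (m₀ : ℤ)) (N : ℕ) (hN : (N : ℤ) = (k₀ : ℤ) + l₀ + m₀ - m - 1) :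
    IsLocalAt (resProd A B m) C N := by
  have hABs := local_symm (M := M) hAB
  have hACs := local_symm (M := M) hAC
  have hBCs := local_symm (M := M) hBC
  have hzA : ∀ r : ℤ, A r (0:M) = 0 := fun r => (hlA r).map_zero
  have hzB : ∀ r : ℤ, B r (0:M) = 0 := fun r => (hlB r).map_zero
  have hzC : ∀ r : ℤ, C r (0:M) = 0 := fun r => (hlC r).map_zero
  intro p q v
  have hW1 : TrW (fun x : ℤ×ℤ×ℤ => A x.1 (B x.2.1 (C x.2.2 v))) := by
    intro t
    obtain ⟨s₀, hs⟩ := hB (C t v)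
    exact ⟨s₀, fun r s hss => by show A r (B s (C t v)) = 0; rw [hs s hss, hzA]⟩
  have hW3 : TrW (fun x : ℤ×ℤ×ℤ => C x.2.2 (A x.1 (B x.2.1 v))) := by
    intro t
    obtain ⟨s₀, hs⟩ := hB v
    exact ⟨s₀, fun r s hss => by
      show C t (A r (B s v)) = 0; rw [hs s hss, hzA, hzC]⟩
  have hW5 : TrW (fun x : ℤ×ℤ×ℤ => A x.1 (C x.2.2 (B x.2.1 v))) := by
    intro t
    obtain ⟨s₀, hs⟩ := hB v
    exact ⟨s₀, fun r s hss => by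
      show A r (C t (B s v)) = 0; rw [hs s hss, hzC, hzA]⟩
  have hZ2 : TrZ (fun x : ℤ×ℤ×ℤ => B x.2.1 (A x.1 (C x.2.2 v))) := by
    intro t
    obtain ⟨r₀, hr⟩ := hA (C t v)
    exact ⟨r₀, fun r s hrr => by show B s (A r (C t v)) = 0; rw [hr r hrr, hzB]⟩
  have hZ4 : TrZ (fun x : ℤ×ℤ×ℤ => C x.2.2 (B x.2.1 (A x.1 v))) := by
    intro t
    obtain ⟨r₀, hr⟩ := hA v
    exact ⟨r₀, fun r s hrr => by
      show C t (B s (A r v)) = 0; rw [hr r hrr, hzB, hzC]⟩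
  have hZ6 : TrZ (fun x : ℤ×ℤ×ℤ => B x.2.1 (C x.2.2 (A x.1 v))) := by
    intro t
    obtain ⟨r₀, hr⟩ := hA v
    exact ⟨r₀, fun r s hrr => by
      show B s (C t (A r v)) = 0; rw [hr r hrr, hzC, hzB]⟩
  have hmap : ∀ (D : Ser M) (hlD : IsLinSer (k := k) D) (t : ℤ) (e : ℤ) (X Y : M),
      e • (D t X - D t Y) = D t (e • (X - Y)) := by
    intro D hlD t e X Y
    calc e • (D t X - D t Y)
        = e • (serHom (k := k) D hlD t X - serHom (k := k) D hlD t Y) := rfl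
      _ = e • serHom (k := k) D hlD t (X - Y) := by rw [map_sub]
      _ = serHom (k := k) D hlD t (e • (X - Y)) :=
          (AddMonoidHom.map_zsmul (serHom (k := k) D hlD t) _ _).symm
  have hab1 : actD ((Zm-Wm)^m₀)
      ((fun x : ℤ×ℤ×ℤ => A x.1 (B x.2.1 (C x.2.2 v)))
        - fun x : ℤ×ℤ×ℤ => B x.2.1 (A x.1 (C x.2.2 v))) = 0 := by
    funext x
    rw [actD_ZW_pow]
    exact hABs x.1 x.2.1 (C x.2.2 v)
  have hab2 : actD ((Zm-Wm)^m₀)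
      ((fun x : ℤ×ℤ×ℤ => C x.2.2 (A x.1 (B x.2.1 v)))
        - fun x : ℤ×ℤ×ℤ => C x.2.2 (B x.2.1 (A x.1 v))) = 0 := by
    funext x
    rw [actD_ZW_pow]
    show ∑ i ∈ range (m₀+1), ((-1:ℤ)^i * (m₀.choose i : ℤ)) •
      (C x.2.2 (A (x.1 + (m₀:ℤ) - i) (B (x.2.1 + i) v))
        - C x.2.2 (B (x.2.1 + i) (A (x.1 + (m₀:ℤ) - i) v))) = 0
    have step1 : ∑ i ∈ range (m₀+1), ((-1:ℤ)^i * (m₀.choose i : ℤ)) •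
        (C x.2.2 (A (x.1 + (m₀:ℤ) - i) (B (x.2.1 + i) v))
          - C x.2.2 (B (x.2.1 + i) (A (x.1 + (m₀:ℤ) - i) v)))
        = serHom (k := k) C hlC x.2.2 (∑ i ∈ range (m₀+1),
            ((-1:ℤ)^i * (m₀.choose i : ℤ)) •
            (A (x.1 + (m₀:ℤ) - i) (B (x.2.1 + i) v)
              - B (x.2.1 + i) (A (x.1 + (m₀:ℤ) - i) v))) := by
      rw [map_sum]
      exact Finset.sum_congr rfl fun i _ => hmap C hlC x.2.2 _ _ _
    rw [step1, hABs x.1 x.2.1 v, map_zero]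
  have hac1 : actD ((Zm-Xm)^k₀)
      ((fun x : ℤ×ℤ×ℤ => A x.1 (C x.2.2 (B x.2.1 v)))
        - fun x : ℤ×ℤ×ℤ => C x.2.2 (A x.1 (B x.2.1 v))) = 0 := by
    funext x
    rw [actD_ZX_pow]
    exact hACs x.1 x.2.2 (B x.2.1 v)
  have hac2 : actD ((Zm-Xm)^k₀)
      ((fun x : ℤ×ℤ×ℤ => B x.2.1 (A x.1 (C x.2.2 v)))
        - fun x : ℤ×ℤ×ℤ => B x.2.1 (C x.2.2 (A x.1 v))) = 0 := by
    funext x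
    rw [actD_ZX_pow]
    show ∑ i ∈ range (k₀+1), ((-1:ℤ)^i * (k₀.choose i : ℤ)) •
      (B x.2.1 (A (x.1 + (k₀:ℤ) - i) (C (x.2.2 + i) v))
        - B x.2.1 (C (x.2.2 + i) (A (x.1 + (k₀:ℤ) - i) v))) = 0
    have step1 : ∑ i ∈ range (k₀+1), ((-1:ℤ)^i * (k₀.choose i : ℤ)) •
        (B x.2.1 (A (x.1 + (k₀:ℤ) - i) (C (x.2.2 + i) v))
          - B x.2.1 (C (x.2.2 + i) (A (x.1 + (k₀:ℤ) - i) v)))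
        = serHom (k := k) B hlB x.2.1 (∑ i ∈ range (k₀+1),
            ((-1:ℤ)^i * (k₀.choose i : ℤ)) •
            (A (x.1 + (k₀:ℤ) - i) (C (x.2.2 + i) v)
              - C (x.2.2 + i) (A (x.1 + (k₀:ℤ) - i) v))) := by
      rw [map_sum]
      exact Finset.sum_congr rfl fun i _ => hmap B hlB x.2.1 _ _ _
    rw [step1, hACs x.1 x.2.2 v, map_zero]
  have hbc1 : actD ((Wm-Xm)^l₀)
      ((fun x : ℤ×ℤ×ℤ => A x.1 (B x.2.1 (C x.2.2 v)))
        - fun x : ℤ×ℤ×ℤ => A x.1 (C x.2.2 (B x.2.1 v))) = 0 := by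
    funext x
    rw [actD_WX_pow]
    show ∑ i ∈ range (l₀+1), ((-1:ℤ)^i * (l₀.choose i : ℤ)) •
      (A x.1 (B (x.2.1 + (l₀:ℤ) - i) (C (x.2.2 + i) v))
        - A x.1 (C (x.2.2 + i) (B (x.2.1 + (l₀:ℤ) - i) v))) = 0
    have step1 : ∑ i ∈ range (l₀+1), ((-1:ℤ)^i * (l₀.choose i : ℤ)) •
        (A x.1 (B (x.2.1 + (l₀:ℤ) - i) (C (x.2.2 + i) v))
          - A x.1 (C (x.2.2 + i) (B (x.2.1 + (l₀:ℤ) - i) v)))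
        = serHom (k := k) A hlA x.1 (∑ i ∈ range (l₀+1),
            ((-1:ℤ)^i * (l₀.choose i : ℤ)) •
            (B (x.2.1 + (l₀:ℤ) - i) (C (x.2.2 + i) v)
              - C (x.2.2 + i) (B (x.2.1 + (l₀:ℤ) - i) v))) := by
      rw [map_sum]
      exact Finset.sum_congr rfl fun i _ => hmap A hlA x.1 _ _ _
    rw [step1, hBCs x.2.1 x.2.2 v, map_zero]
  have hbc2 : actD ((Wm-Xm)^l₀)
      ((fun x : ℤ×ℤ×ℤ => B x.2.1 (C x.2.2 (A x.1 v)))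
        - fun x : ℤ×ℤ×ℤ => C x.2.2 (B x.2.1 (A x.1 v))) = 0 := by
    funext x
    rw [actD_WX_pow]
    exact hBCs x.2.1 x.2.2 (A x.1 v)
  have hdong := dong (M := M)
    (fun x : ℤ×ℤ×ℤ => A x.1 (B x.2.1 (C x.2.2 v)))
    (fun x : ℤ×ℤ×ℤ => B x.2.1 (A x.1 (C x.2.2 v)))
    (fun x : ℤ×ℤ×ℤ => C x.2.2 (A x.1 (B x.2.1 v)))
    (fun x : ℤ×ℤ×ℤ => C x.2.2 (B x.2.1 (A x.1 v)))
    (fun x : ℤ×ℤ×ℤ => A x.1 (C x.2.2 (B x.2.1 v)))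
    (fun x : ℤ×ℤ×ℤ => B x.2.1 (C x.2.2 (A x.1 v)))
    k₀ l₀ m₀ hW1 hW3 hW5 hZ2 hZ4 hZ6 hab1 hab2 hac1 hac2 hbc1 hbc2 m N hm hN
  have hH : ∀ s t : ℤ,
      (Ezw m (fun x : ℤ×ℤ×ℤ => A x.1 (B x.2.1 (C x.2.2 v)))
        - Ewz m (fun x : ℤ×ℤ×ℤ => B x.2.1 (A x.1 (C x.2.2 v)))
        - (Ezw m (fun x : ℤ×ℤ×ℤ => C x.2.2 (A x.1 (B x.2.1 v)))
          - Ewz m (fun x : ℤ×ℤ×ℤ => C x.2.2 (B x.2.1 (A x.1 v))))) ((0:ℤ), s, t)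
        = resProd A B m s (C t v) - C t (resProd A B m s v) := by
    intro s t
    have e1 : Ezw m (fun x : ℤ×ℤ×ℤ => A x.1 (B x.2.1 (C x.2.2 v))) ((0:ℤ), s, t)
        = ∑ᶠ i : ℕ, Ei m i • A (m - i) (B (s + i) (C t v)) := by
      apply finsum_congr; intro i
      show Ei m i • A ((0:ℤ) + m - i) (B (s + i) (C t v)) = _
      rw [zero_add]
    have e2 : Ewz m (fun x : ℤ×ℤ×ℤ => B x.2.1 (A x.1 (C x.2.2 v))) ((0:ℤ), s, t)
        = ∑ᶠ i : ℕ, (msign m * Ei m i) • B (m + s - i) (A i (C t v)) := by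
      apply finsum_congr; intro i
      show (msign m * Ei m i) • B (s + m - i) (A ((0:ℤ) + i) (C t v)) = _
      rw [zero_add, show s + m - (i:ℤ) = m + s - i from by ring]
    have e3 : Ezw m (fun x : ℤ×ℤ×ℤ => C x.2.2 (A x.1 (B x.2.1 v))) ((0:ℤ), s, t)
        = ∑ᶠ i : ℕ, Ei m i • C t (A (m - i) (B (s + i) v)) := by
      apply finsum_congr; intro i
      show Ei m i • C t (A ((0:ℤ) + m - i) (B (s + i) v)) = _
      rw [zero_add]
    have e4 : Ewz m (fun x : ℤ×ℤ×ℤ => C x.2.2 (B x.2.1 (A x.1 v))) ((0:ℤ), s, t)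
        = ∑ᶠ i : ℕ, (msign m * Ei m i) • C t (B (m + s - i) (A i v)) := by
      apply finsum_congr; intro i
      show (msign m * Ei m i) • C t (B (s + m - i) (A ((0:ℤ) + i) v)) = _
      rw [zero_add, show s + m - (i:ℤ) = m + s - i from by ring]
    show Ezw m (fun x : ℤ×ℤ×ℤ => A x.1 (B x.2.1 (C x.2.2 v))) ((0:ℤ), s, t)
        - Ewz m (fun x : ℤ×ℤ×ℤ => B x.2.1 (A x.1 (C x.2.2 v))) ((0:ℤ), s, t)
        - (Ezw m (fun x : ℤ×ℤ×ℤ => C x.2.2 (A x.1 (B x.2.1 v))) ((0:ℤ), s, t)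
          - Ewz m (fun x : ℤ×ℤ×ℤ => C x.2.2 (B x.2.1 (A x.1 v))) ((0:ℤ), s, t))
        = resProd A B m s (C t v) - C t (resProd A B m s v)
    rw [e1, e2, e3, e4, resProd_modes hA hB hzA hzB m s (C t v),
      resProd_modes hA hB hzA hzB m s v]
    have hc3 : C t ((∑ᶠ i : ℕ, Ei m i • A (m - i) (B (s + i) v))
          - ∑ᶠ i : ℕ, (msign m * Ei m i) • B (m + s - i) (A i v))
        = (∑ᶠ i : ℕ, Ei m i • C t (A (m - i) (B (s + i) v)))
          - ∑ᶠ i : ℕ, (msign m * Ei m i) • C t (B (m + s - i) (A i v)) := by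
      calc C t ((∑ᶠ i : ℕ, Ei m i • A (m - i) (B (s + i) v))
            - ∑ᶠ i : ℕ, (msign m * Ei m i) • B (m + s - i) (A i v))
          = serHom (k := k) C hlC t ((∑ᶠ i : ℕ, Ei m i • A (m - i) (B (s + i) v))
            - ∑ᶠ i : ℕ, (msign m * Ei m i) • B (m + s - i) (A i v)) := rfl
        _ = serHom (k := k) C hlC t (∑ᶠ i : ℕ, Ei m i • A (m - i) (B (s + i) v))
            - serHom (k := k) C hlC t
              (∑ᶠ i : ℕ, (msign m * Ei m i) • B (m + s - i) (A i v)) := map_sub _ _ _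
        _ = (∑ᶠ i : ℕ, serHom (k := k) C hlC t (Ei m i • A (m - i) (B (s + i) v)))
            - ∑ᶠ i : ℕ, serHom (k := k) C hlC t
                ((msign m * Ei m i) • B (m + s - i) (A i v)) := by
            rw [AddMonoidHom.map_finsum _ (supp1 hB m s v hzA),
              AddMonoidHom.map_finsum _ (supp2 hA m s v hzB)]
        _ = (∑ᶠ i : ℕ, Ei m i • C t (A (m - i) (B (s + i) v)))
            - ∑ᶠ i : ℕ, (msign m * Ei m i) • C t (B (m + s - i) (A i v)) := by
            rw [finsum_congr (fun i =>
                AddMonoidHom.map_zsmul (serHom (k := k) C hlC t) (Ei m i) _),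
              finsum_congr (fun i =>
                AddMonoidHom.map_zsmul (serHom (k := k) C hlC t) (msign m * Ei m i) _)]
            rfl
    rw [hc3]
  have hev := congrFun hdong ((0:ℤ), p, q)
  rw [actD_WX_pow] at hev
  have hev2 : ∑ j ∈ range (N+1), ((-1:ℤ)^j * (N.choose j:ℤ)) •
      (resProd A B m (p + (N:ℤ) - j) (C (q + j) v)
        - C (q + j) (resProd A B m (p + (N:ℤ) - j) v)) = 0 := by
    calc ∑ j ∈ range (N+1), ((-1:ℤ)^j * (N.choose j:ℤ)) •
        (resProd A B m (p + (N:ℤ) - j) (C (q + j) v)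
          - C (q + j) (resProd A B m (p + (N:ℤ) - j) v))
        = ∑ j ∈ range (N+1), ((-1:ℤ)^j * (N.choose j:ℤ)) •
          ((Ezw m (fun x : ℤ×ℤ×ℤ => A x.1 (B x.2.1 (C x.2.2 v)))
            - Ewz m (fun x : ℤ×ℤ×ℤ => B x.2.1 (A x.1 (C x.2.2 v)))
            - (Ezw m (fun x : ℤ×ℤ×ℤ => C x.2.2 (A x.1 (B x.2.1 v)))
              - Ewz m (fun x : ℤ×ℤ×ℤ => C x.2.2 (B x.2.1 (A x.1 v)))))
            ((0:ℤ), p + (N:ℤ) - j, q + j)) := by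
          exact Finset.sum_congr rfl fun j _ => by rw [hH]
      _ = 0 := hev
  have hflip : ∑ i ∈ range (N+1), ((-1:ℤ)^i * (N.choose i:ℤ)) •
      ((-1:ℤ)^N • C (q + (N:ℤ) - i) (resProd A B m (p + i) v))
      = ∑ i ∈ range (N+1), ((-1:ℤ)^i * (N.choose i:ℤ)) •
        C (q + i) (resProd A B m (p + (N:ℤ) - i) v) :=
    flip_sum (fun x y => C x (resProd A B m y v)) N q p
  calc ∑ i ∈ range (N+1), ((-1:ℤ)^i * (N.choose i:ℤ)) •
      (resProd A B m (p + (N:ℤ) - i) (C (q + i) v)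
        - (-1:ℤ)^N • C (q + (N:ℤ) - i) (resProd A B m (p + i) v))
      = ∑ i ∈ range (N+1), (((-1:ℤ)^i * (N.choose i:ℤ)) •
          resProd A B m (p + (N:ℤ) - i) (C (q + i) v)
          - ((-1:ℤ)^i * (N.choose i:ℤ)) •
            ((-1:ℤ)^N • C (q + (N:ℤ) - i) (resProd A B m (p + i) v))) := by
        exact Finset.sum_congr rfl fun i _ => smul_sub _ _ _
    _ = ∑ i ∈ range (N+1), ((-1:ℤ)^i * (N.choose i:ℤ)) •
          resProd A B m (p + (N:ℤ) - i) (C (q + i) v)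
        - ∑ i ∈ range (N+1), ((-1:ℤ)^i * (N.choose i:ℤ)) •
          ((-1:ℤ)^N • C (q + (N:ℤ) - i) (resProd A B m (p + i) v)) :=
        Finset.sum_sub_distrib _ _
    _ = ∑ i ∈ range (N+1), ((-1:ℤ)^i * (N.choose i:ℤ)) •
          resProd A B m (p + (N:ℤ) - i) (C (q + i) v)
        - ∑ i ∈ range (N+1), ((-1:ℤ)^i * (N.choose i:ℤ)) •
          C (q + i) (resProd A B m (p + (N:ℤ) - i) v) := by rw [hflip]
    _ = ∑ i ∈ range (N+1), (((-1:ℤ)^i * (N.choose i:ℤ)) •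
          resProd A B m (p + (N:ℤ) - i) (C (q + i) v)
          - ((-1:ℤ)^i * (N.choose i:ℤ)) •
            C (q + i) (resProd A B m (p + (N:ℤ) - i) v)) :=
        (Finset.sum_sub_distrib _ _).symm
    _ = ∑ i ∈ range (N+1), ((-1:ℤ)^i * (N.choose i:ℤ)) •
          (resProd A B m (p + (N:ℤ) - i) (C (q + i) v)
            - C (q + i) (resProd A B m (p + (N:ℤ) - i) v)) := by
        exact Finset.sum_congr rfl fun i _ => (smul_sub _ _ _).symm
    _ = 0 := hev2

lemma resProd_zero (A B : Ser M)
    (hA : IsFieldSer A) (hB : IsFieldSer B)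
    (hlA : IsLinSer (k := k) A) (hlB : IsLinSer (k := k) B)
    (m₀ : ℕ) (hAB : IsLocalAt A B m₀) (m : ℤ) (hm : (m₀:ℤ) ≤ m) :
    resProd A B m = 0 := by
  have hABs := local_symm (M := M) hAB
  have hzA : ∀ r : ℤ, A r (0:M) = 0 := fun r => (hlA r).map_zero
  have hzB : ∀ r : ℤ, B r (0:M) = 0 := fun r => (hlB r).map_zero
  funext n u
  have hW1 : TrW (fun x : ℤ×ℤ×ℤ => A x.1 (B x.2.1 u)) := by
    intro t
    obtain ⟨s₀, hs⟩ := hB u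
    exact ⟨s₀, fun r s hss => by show A r (B s u) = 0; rw [hs s hss, hzA]⟩
  have hZ2 : TrZ (fun x : ℤ×ℤ×ℤ => B x.2.1 (A x.1 u)) := by
    intro t
    obtain ⟨r₀, hr⟩ := hA u
    exact ⟨r₀, fun r s hrr => by show B s (A r u) = 0; rw [hr r hrr, hzB]⟩
  have hab : actD ((Zm-Wm)^m₀)
      ((fun x : ℤ×ℤ×ℤ => A x.1 (B x.2.1 u)) - fun x : ℤ×ℤ×ℤ => B x.2.1 (A x.1 u)) = 0 := by
    funext x
    rw [actD_ZW_pow]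
    exact hABs x.1 x.2.1 u
  have e1 : Ezw m (fun x : ℤ×ℤ×ℤ => A x.1 (B x.2.1 u)) ((0:ℤ), n, 0)
      = ∑ᶠ i : ℕ, Ei m i • A (m - i) (B (n + i) u) := by
    apply finsum_congr; intro i
    show Ei m i • A ((0:ℤ) + m - i) (B (n + i) u) = _
    rw [zero_add]
  have e2 : Ewz m (fun x : ℤ×ℤ×ℤ => B x.2.1 (A x.1 u)) ((0:ℤ), n, 0)
      = ∑ᶠ i : ℕ, (msign m * Ei m i) • B (m + n - i) (A i u) := by
    apply finsum_congr; intro i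
    show (msign m * Ei m i) • B (n + m - i) (A ((0:ℤ) + i) u) = _
    rw [zero_add, show n + m - (i:ℤ) = m + n - i from by ring]
  have e12 : resProd A B m n u
      = Ezw m (fun x : ℤ×ℤ×ℤ => A x.1 (B x.2.1 u)) ((0:ℤ), n, 0)
        - Ewz m (fun x : ℤ×ℤ×ℤ => B x.2.1 (A x.1 u)) ((0:ℤ), n, 0) := by
    rw [resProd_modes hA hB hzA hzB, e1, e2]
  set n' : ℕ := m.toNat with hn'def
  have hn' : ((n':ℕ):ℤ) = m := Int.toNat_of_nonneg (by omega)
  have hfun : Ezw m (fun x : ℤ×ℤ×ℤ => A x.1 (B x.2.1 u))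
        - Ewz m (fun x : ℤ×ℤ×ℤ => B x.2.1 (A x.1 u))
      = actD ((Zm-Wm)^(n':ℕ))
          ((fun x : ℤ×ℤ×ℤ => A x.1 (B x.2.1 u)) - fun x : ℤ×ℤ×ℤ => B x.2.1 (A x.1 u)) := by
    rw [← hn', Ezw_natCast, Ewz_natCast, actD_sub_right]
  have hkill : actD ((Zm-Wm)^(n':ℕ))
      ((fun x : ℤ×ℤ×ℤ => A x.1 (B x.2.1 u)) - fun x : ℤ×ℤ×ℤ => B x.2.1 (A x.1 u)) = 0 := by
    rw [show ((Zm-Wm):R3)^(n':ℕ) = (Zm-Wm)^(n' - m₀) * (Zm-Wm)^m₀ from by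
      rw [← pow_add]; congr 1; omega]
    rw [actD_mul, hab, actD_zero_right]
  rw [e12]
  exact congrFun (hfun.trans hkill) ((0:ℤ), n, 0)


/-- If `A, B, C` are pairwise mutually local fields, then `A(z)_(m)B(z)` is mutually
local with `C(z)` for every `m`, with order at most `k₀ + l₀ + m₀ - m - 1` when
`m < m₀`, where `k₀, l₀, m₀` are the orders of locality of (A,C), (B,C), (A,B). -/
theorem stmt8 (A B C : Ser M)
    (hA : IsFieldSer A) (hB : IsFieldSer B) (hC : IsFieldSer C)
    (hlA : IsLinSer (k := k) A) (hlB : IsLinSer (k := k) B) (hlC : IsLinSer (k := k) C)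
    (k₀ l₀ m₀ : ℕ) (hAC : HasOrder A C k₀) (hBC : HasOrder B C l₀) (hAB : HasOrder A B m₀)
    (m : ℤ) :
    (∃ n : ℕ, IsLocalAt (resProd A B m) C n) ∧
    (m < (m₀ : ℤ) → ∀ N : ℕ, (N : ℤ) = (k₀ : ℤ) + l₀ + m₀ - m - 1 →
      IsLocalAt (resProd A B m) C N) := by
  constructor
  · rcases lt_or_ge m (m₀:ℤ) with hm | hm
    · refine ⟨((k₀:ℤ) + l₀ + m₀ - m - 1).toNat, ?_⟩
      exact key_local A B C hA hB hC hlA hlB hlC k₀ l₀ m₀ hAC.1 hBC.1 hAB.1 m hm _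
        (Int.toNat_of_nonneg (by omega))
    · refine ⟨0, ?_⟩
      have h0 : resProd A B m = 0 := resProd_zero A B hA hB hlA hlB m₀ hAB.1 m hm
      intro p q v
      have hzC : ∀ r : ℤ, C r (0:M) = 0 := fun r => (hlC r).map_zero
      rw [h0]
      simp [hzC]
  · intro hm N hN
    exact key_local A B C hA hB hC hlA hlB hlC k₀ l₀ m₀ hAC.1 hBC.1 hAB.1 m hm N hN

end VA
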